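/- In the recursive controller construction with Lyapunov function V_κ(z) := Σ_{j=1}^r W_j(z)^{(c+1)/(c+p_j)}, at every point z ∈ ℝ^r where V_κ is differentiable and z_i ≠ v_{i-1}(z) for all i < r, the following hold: (∂V_κ/∂z_r)(z)·ω_κ(z) ≤ 0, and if ω_κ(z) = 0 then (∂V_κ/∂z_r)(z) = 0. That is, the homogeneous feedback ω_κ satisfies the structural conditions required for robustification against bounded matched perturbations. -/

import Mathlib

/-- The `i`-th coordinate (0-based) of `z ∈ ℝ^r`, extended by `0` out of range. -/
noncomputable def coord (r : ℕ) (z : Fin r → ℝ) (i : ℕ) : ℝ :=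
  if h : i < r then z ⟨i, h⟩ else 0

/-- `Ssum r κ c i z = Σ_{j=1}^{i} |z_j|^{c/p_j}` with `p_j = 1 + (j-1)κ` (paper 1-based
indices; `k` below is the 0-based index `j-1`). -/
noncomputable def Ssum (r : ℕ) (κ c : ℝ) (i : ℕ) (z : Fin r → ℝ) : ℝ :=
  ∑ k ∈ Finset.range i, |coord r z k| ^ (c / (1 + (k : ℝ) * κ))

/-- The recursively defined virtual controls: `v_0 = 0` and
`v_i = -l_i N_i sign(z_i - v_{i-1})` with `N_i = (Ssum_i)^{(p_i+κ)/c}`, `p_i = 1 + (i-1)κ`.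
The feedback is `ω_κ = vrec r κ c l r`. -/
noncomputable def vrec (r : ℕ) (κ c : ℝ) (l : ℕ → ℝ) : ℕ → (Fin r → ℝ) → ℝ
  | 0 => fun _ => 0
  | i + 1 => fun z =>
      -(l (i + 1)) * (Ssum r κ c (i + 1) z) ^ ((1 + (i : ℝ) * κ + κ) / c) *
        Real.sign (coord r z i - vrec r κ c l i z)

/-- `⌊x⌉^β = |x|^β sign(x)`. -/
noncomputable def sgnPow (x β : ℝ) : ℝ := |x| ^ β * Real.sign x

/-- `W_i(z) = (Σ_{j=1}^{i-1} |z_j|^{c/p_j})|z_i - v_{i-1}| +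
|⌊z_i⌉^{c/p_i+1} - ⌊v_{i-1}⌉^{c/p_i+1}|/(c/p_i+1)` (paper 1-based index `i`). -/
noncomputable def Wfun (r : ℕ) (κ c : ℝ) (l : ℕ → ℝ) : ℕ → (Fin r → ℝ) → ℝ
  | 0 => fun _ => 0
  | i + 1 => fun z =>
      Ssum r κ c i z * |coord r z i - vrec r κ c l i z| +
        |sgnPow (coord r z i) (c / (1 + (i : ℝ) * κ) + 1) -
            sgnPow (vrec r κ c l i z) (c / (1 + (i : ℝ) * κ) + 1)| /
          (c / (1 + (i : ℝ) * κ) + 1)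

/-- The dilation `ζ_ε^p` with weights `p_i = 1 + (i-1)κ` (0-based: `p_j = 1 + jκ`). -/
noncomputable def dil (r : ℕ) (κ ε : ℝ) (z : Fin r → ℝ) : Fin r → ℝ :=
  fun j => ε ^ (1 + (j : ℕ) * κ) * z j

/-- The Lyapunov function `V_κ(z) = Σ_{j=1}^{r} W_j(z)^{(c+1)/(c+p_j)}`. -/
noncomputable def Vfun (r : ℕ) (κ c : ℝ) (l : ℕ → ℝ) (z : Fin r → ℝ) : ℝ :=
  ∑ j ∈ Finset.range r, (Wfun r κ c l (j + 1) z) ^ ((c + 1) / (c + 1 + (j : ℝ) * κ))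

/-- Structural conditions for robustification: at every point where `V_κ` is differentiable
and `z_i ≠ v_{i-1}(z)` for all paper indices `i < r`, one has
`(∂V_κ/∂z_r)(z) · ω_κ(z) ≤ 0`, and `ω_κ(z) = 0` implies `(∂V_κ/∂z_r)(z) = 0`. -/
-- auxiliary lemmas

lemma sgnPow_of_nonneg {x : ℝ} (β : ℝ) (hβ : β ≠ 0) (hx : 0 ≤ x) : sgnPow x β = x ^ β := by
  rcases hx.eq_or_lt with h | h
  · simp [sgnPow, ← h, Real.zero_rpow hβ]
  · simp [sgnPow, abs_of_pos h, Real.sign_of_pos h]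

lemma sgnPow_of_nonpos {x : ℝ} (β : ℝ) (hβ : β ≠ 0) (hx : x ≤ 0) : sgnPow x β = -((-x) ^ β) := by
  rcases hx.eq_or_lt with h | h
  · simp [sgnPow, h, Real.zero_rpow hβ]
  · rw [sgnPow, abs_of_neg h, Real.sign_of_neg h]; ring

lemma sgnPow_mono {β : ℝ} (hβ : 0 < β) : Monotone (sgnPow · β) := by
  intro a b hab
  show sgnPow a β ≤ sgnPow b β
  rcases le_or_gt 0 a with ha | ha
  · rw [sgnPow_of_nonneg β hβ.ne' ha, sgnPow_of_nonneg β hβ.ne' (ha.trans hab)]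
    exact Real.rpow_le_rpow ha hab hβ.le
  · rcases le_or_gt 0 b with hb | hb
    · rw [sgnPow_of_nonpos β hβ.ne' ha.le, sgnPow_of_nonneg β hβ.ne' hb]
      have h1 : (0:ℝ) ≤ (-a) ^ β := Real.rpow_nonneg (by linarith) β
      have h2 : (0:ℝ) ≤ b ^ β := Real.rpow_nonneg hb β
      linarith
    · rw [sgnPow_of_nonpos β hβ.ne' ha.le, sgnPow_of_nonpos β hβ.ne' hb.le]
      have := Real.rpow_le_rpow (by linarith : (0:ℝ) ≤ -b) (by linarith : -b ≤ -a) hβ.le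
      linarith

lemma deriv_nonneg_of_monotoneOn {g : ℝ → ℝ} {d v t : ℝ} (hg : HasDerivAt g d t)
    (hm : MonotoneOn g (Set.Ici v)) (hv : v < t) : 0 ≤ d := by
  have h1 : Filter.Tendsto (slope g t) (nhdsWithin t (Set.Ioi t)) (nhds d) :=
    (hasDerivAt_iff_tendsto_slope.mp hg).mono_left
      (nhdsWithin_mono t (fun s hs => ne_of_gt hs))
  refine ge_of_tendsto h1 ?_
  filter_upwards [self_mem_nhdsWithin] with s hs
  have hts : t < s := hs
  have hmono : g t ≤ g s := hm hv.le (hv.trans hts).le hts.le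
  rw [slope_def_field]
  exact div_nonneg (by linarith) (by linarith)

lemma deriv_nonpos_of_antitoneOn {g : ℝ → ℝ} {d v t : ℝ} (hg : HasDerivAt g d t)
    (hm : AntitoneOn g (Set.Iic v)) (hv : t < v) : d ≤ 0 := by
  have h1 : Filter.Tendsto (slope g t) (nhdsWithin t (Set.Iio t)) (nhds d) :=
    (hasDerivAt_iff_tendsto_slope.mp hg).mono_left
      (nhdsWithin_mono t (fun s hs => ne_of_lt hs))
  refine le_of_tendsto h1 ?_
  filter_upwards [self_mem_nhdsWithin] with s hs
  have hst : s < t := hs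
  have hmono : g t ≤ g s := hm (hst.trans hv).le hv.le hst.le
  rw [slope_def_field]
  exact div_nonpos_of_nonneg_of_nonpos (by linarith) (by linarith)

lemma coord_update {r : ℕ} (z : Fin r → ℝ) (i0 : Fin r) (s : ℝ) {k : ℕ}
    (hk : k ≠ (i0 : ℕ)) : coord r (Function.update z i0 s) k = coord r z k := by
  rcases lt_or_ge k r with h | h
  · rw [coord, coord, dif_pos h, dif_pos h,
      Function.update_of_ne (fun hh => hk (congrArg Fin.val hh))]
  · rw [coord, coord, dif_neg (by omega), dif_neg (by omega)]

lemma coord_update_self {r : ℕ} (z : Fin r → ℝ) (i0 : Fin r) (s : ℝ) :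
    coord r (Function.update z i0 s) (i0 : ℕ) = s := by
  rw [coord, dif_pos i0.isLt, Fin.eta, Function.update_self]

lemma Ssum_update {r : ℕ} (κ c : ℝ) (z : Fin r → ℝ) (i0 : Fin r) (s : ℝ) {i : ℕ}
    (hi : i ≤ (i0 : ℕ)) : Ssum r κ c i (Function.update z i0 s) = Ssum r κ c i z := by
  unfold Ssum
  refine Finset.sum_congr rfl fun k hk => ?_
  rw [coord_update z i0 s (by have := Finset.mem_range.mp hk; omega)]

lemma vrec_update {r : ℕ} (κ c : ℝ) (l : ℕ → ℝ) (z : Fin r → ℝ) (i0 : Fin r) (s : ℝ) :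
    ∀ i, i ≤ (i0 : ℕ) → vrec r κ c l i (Function.update z i0 s) = vrec r κ c l i z := by
  intro i
  induction i with
  | zero => intro _; rfl
  | succ i ih =>
    intro hi
    show -(l (i + 1)) * _ ^ _ * Real.sign _ = -(l (i + 1)) * _ ^ _ * Real.sign _
    rw [Ssum_update κ c z i0 s hi, coord_update z i0 s (by omega), ih (by omega)]

lemma Wfun_update {r : ℕ} (κ c : ℝ) (l : ℕ → ℝ) (z : Fin r → ℝ) (i0 : Fin r) (s : ℝ) {i : ℕ}
    (hi : i ≤ (i0 : ℕ)) : Wfun r κ c l i (Function.update z i0 s) = Wfun r κ c l i z := by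
  match i with
  | 0 => rfl
  | i + 1 =>
    simp only [Wfun]
    rw [Ssum_update κ c z i0 s (by omega), coord_update z i0 s (by omega),
      vrec_update κ c l z i0 s i (by omega)]

lemma vrec_zero {r : ℕ} (κ c : ℝ) (l : ℕ → ℝ) (z : Fin r → ℝ)
    (h0 : ∀ k, k < r → coord r z k = 0) :
    ∀ i, i ≤ r → vrec r κ c l i z = 0 := by
  intro i
  induction i with
  | zero => intro _; rfl
  | succ i ih =>
    intro hi
    show -(l (i + 1)) * _ ^ _ * Real.sign (coord r z i - vrec r κ c l i z) = 0
    rw [h0 i (by omega), ih (by omega), sub_zero, Real.sign_zero, mul_zero]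
lemma key {A v β α C D t : ℝ} {g : ℝ → ℝ}
    (hA : 0 ≤ A) (hβ : 0 < β) (hα : 0 < α)
    (hg : ∀ s, g s = C + (A * |s - v| + |sgnPow s β - sgnPow v β| / β) ^ α)
    (hD : HasDerivAt g D t) :
    (t = v → D = 0) ∧ (v < t → 0 ≤ D) ∧ (t < v → D ≤ 0) := by
  have hW0 : ∀ s : ℝ, 0 ≤ A * |s - v| + |sgnPow s β - sgnPow v β| / β := fun s =>
    add_nonneg (mul_nonneg hA (abs_nonneg _)) (div_nonneg (abs_nonneg _) hβ.le)
  have hmono : MonotoneOn g (Set.Ici v) := by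
    intro s1 hs1 s2 hs2 h12
    have hvs1 : v ≤ s1 := hs1
    rw [hg, hg]
    have h1 : sgnPow v β ≤ sgnPow s1 β := sgnPow_mono hβ hvs1
    have h2 : sgnPow s1 β ≤ sgnPow s2 β := sgnPow_mono hβ h12
    have ha1 : |s1 - v| ≤ |s2 - v| := by
      rw [abs_of_nonneg (by linarith), abs_of_nonneg (by linarith)]; linarith
    have ha2 : |sgnPow s1 β - sgnPow v β| ≤ |sgnPow s2 β - sgnPow v β| := by
      rw [abs_of_nonneg (by linarith), abs_of_nonneg (by linarith)]; linarith
    refine add_le_add le_rfl (Real.rpow_le_rpow (hW0 s1) ?_ hα.le)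
    have hm1 : A * |s1 - v| ≤ A * |s2 - v| := mul_le_mul_of_nonneg_left ha1 hA
    have hm2 : |sgnPow s1 β - sgnPow v β| / β ≤ |sgnPow s2 β - sgnPow v β| / β :=
      div_le_div_of_nonneg_right ha2 hβ.le
    linarith
  have hanti : AntitoneOn g (Set.Iic v) := by
    intro s1 hs1 s2 hs2 h12
    have hvs2 : s2 ≤ v := hs2
    rw [hg, hg]
    have h1 : sgnPow s2 β ≤ sgnPow v β := sgnPow_mono hβ hvs2
    have h2 : sgnPow s1 β ≤ sgnPow s2 β := sgnPow_mono hβ h12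
    have ha1 : |s2 - v| ≤ |s1 - v| := by
      rw [abs_of_nonpos (by linarith), abs_of_nonpos (by linarith)]; linarith
    have ha2 : |sgnPow s2 β - sgnPow v β| ≤ |sgnPow s1 β - sgnPow v β| := by
      rw [abs_of_nonpos (by linarith), abs_of_nonpos (by linarith)]; linarith
    refine add_le_add le_rfl (Real.rpow_le_rpow (hW0 s2) ?_ hα.le)
    have hm1 : A * |s2 - v| ≤ A * |s1 - v| := mul_le_mul_of_nonneg_left ha1 hA
    have hm2 : |sgnPow s2 β - sgnPow v β| / β ≤ |sgnPow s1 β - sgnPow v β| / β :=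
      div_le_div_of_nonneg_right ha2 hβ.le
    linarith
  refine ⟨?_, fun h => deriv_nonneg_of_monotoneOn hD hmono h,
    fun h => deriv_nonpos_of_antitoneOn hD hanti h⟩
  intro htv
  subst htv
  have hgt : g t = C := by
    rw [hg]; simp [Real.zero_rpow hα.ne']
  have hminf : ∀ s, g t ≤ g s := by
    intro s
    rw [hgt, hg]
    have := Real.rpow_nonneg (hW0 s) α
    linarith
  have hmin : IsLocalMin g t := Filter.Eventually.of_forall hminf
  exact hmin.hasDerivAt_eq_zero hD

theorem stmt15 (r : ℕ) (hr : 1 ≤ r) (κ c : ℝ)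
    (hκl : -(1 / (r : ℝ)) ≤ κ) (hκu : κ ≤ 1 / (r : ℝ))
    (l : ℕ → ℝ) (hl : ∀ i, 1 ≤ i → i ≤ r → 0 < l i)
    (hc : ∀ i, i < r → 1 + (i : ℝ) * κ ≤ c) :
    ∀ z : Fin r → ℝ, DifferentiableAt ℝ (Vfun r κ c l) z →
      (∀ i, i + 1 < r → coord r z i ≠ vrec r κ c l i z) →
      fderiv ℝ (Vfun r κ c l) z (Pi.single (⟨r - 1, by omega⟩ : Fin r) (1 : ℝ)) *
          vrec r κ c l r z ≤ 0 ∧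
      (vrec r κ c l r z = 0 →
        fderiv ℝ (Vfun r κ c l) z (Pi.single (⟨r - 1, by omega⟩ : Fin r) (1 : ℝ)) = 0) := by

  obtain ⟨n, rfl⟩ : ∃ n, r = n + 1 := ⟨r - 1, by omega⟩
  intro z hV _hne
  have hκl' : -(1 / ((n : ℝ) + 1)) ≤ κ := by push_cast at hκl; exact hκl
  have hp : (0:ℝ) < 1 + (n:ℝ) * κ := by
    have h1 : (n:ℝ) * -(1/((n:ℝ)+1)) ≤ (n:ℝ) * κ :=
      mul_le_mul_of_nonneg_left hκl' (Nat.cast_nonneg n)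
    have h2 : (n:ℝ) * (1/((n:ℝ)+1)) < 1 := by
      rw [mul_one_div, div_lt_one (by positivity)]; linarith
    nlinarith
  have hc1 : (1:ℝ) ≤ c := by simpa using hc 0 (by omega)
  have hβ : 0 < c / (1 + (n:ℝ)*κ) + 1 := by
    have := div_pos (by linarith : (0:ℝ) < c) hp
    linarith
  have hα : 0 < (c+1)/(c+1+(n:ℝ)*κ) := div_pos (by linarith) (by linarith)
  set i0 : Fin (n+1) := ⟨n, by omega⟩ with hi0def
  have hA : 0 ≤ Ssum (n+1) κ c n z :=
    Finset.sum_nonneg fun k _ => Real.rpow_nonneg (abs_nonneg _) _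
  have hS : 0 ≤ Ssum (n+1) κ c (n+1) z :=
    Finset.sum_nonneg fun k _ => Real.rpow_nonneg (abs_nonneg _) _
  have heq : ∀ s : ℝ, Vfun (n+1) κ c l (Function.update z i0 s) =
      (∑ j ∈ Finset.range n, (Wfun (n+1) κ c l (j+1) z) ^ ((c+1)/(c+1+(j:ℝ)*κ))) +
      (Ssum (n+1) κ c n z * |s - vrec (n+1) κ c l n z| +
        |sgnPow s (c/(1+(n:ℝ)*κ)+1) - sgnPow (vrec (n+1) κ c l n z) (c/(1+(n:ℝ)*κ)+1)| /
          (c/(1+(n:ℝ)*κ)+1)) ^ ((c+1)/(c+1+(n:ℝ)*κ)) := by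
    intro s
    have hcu : coord (n+1) (Function.update z i0 s) n = s := coord_update_self z i0 s
    simp only [Vfun, Finset.sum_range_succ]
    congr 1
    · refine Finset.sum_congr rfl fun j hj => ?_
      have hjn : j < n := Finset.mem_range.mp hj
      rw [Wfun_update κ c l z i0 s (show j + 1 ≤ ((i0 : Fin (n+1)) : ℕ) from by
        simp only [hi0def]; omega)]
    · congr 1
      simp only [Wfun]
      rw [Ssum_update κ c z i0 s (show n ≤ ((i0 : Fin (n+1)) : ℕ) from by
        simp only [hi0def]; omega), hcu,
        vrec_update κ c l z i0 s n (show n ≤ ((i0 : Fin (n+1)) : ℕ) from by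
        simp only [hi0def]; omega)]
  have hD : HasDerivAt (fun s => Vfun (n+1) κ c l (Function.update z i0 s))
      (fderiv ℝ (Vfun (n+1) κ c l) z (Pi.single i0 1)) (z i0) := by
    have h1 : HasFDerivAt (Vfun (n+1) κ c l) (fderiv ℝ (Vfun (n+1) κ c l) z)
        (Function.update z i0 (z i0)) := by
      rw [Function.update_eq_self]; exact hV.hasFDerivAt
    exact h1.comp_hasDerivAt (z i0) (hasDerivAt_update z i0 (z i0))
  have htz : coord (n+1) z n = z i0 := dif_pos (Nat.lt_succ_self n)
  rw [← htz] at hD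
  obtain ⟨hmin, hpos, hneg⟩ := key hA hβ hα heq hD
  have hω : vrec (n+1) κ c l (n+1) z =
      -(l (n+1)) * (Ssum (n+1) κ c (n+1) z) ^ ((1 + (n:ℝ) * κ + κ) / c) *
        Real.sign (coord (n+1) z n - vrec (n+1) κ c l n z) := rfl
  have hl1 : 0 < l (n+1) := hl (n+1) (by omega) (le_refl _)
  have hSe : 0 ≤ (Ssum (n+1) κ c (n+1) z) ^ ((1 + (n:ℝ) * κ + κ) / c) :=
    Real.rpow_nonneg hS _
  set D := fderiv ℝ (Vfun (n+1) κ c l) z (Pi.single i0 1) with hDdef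
  have hteqv : Ssum (n+1) κ c (n+1) z = 0 →
      coord (n+1) z n = vrec (n+1) κ c l n z := by
    intro hS0
    have hzero : ∀ k, k < n+1 → coord (n+1) z k = 0 := by
      intro k hk
      have hall := (Finset.sum_eq_zero_iff_of_nonneg
        (fun k _ => Real.rpow_nonneg (abs_nonneg _) _)).mp hS0 k (Finset.mem_range.mpr hk)
      have := ((Real.rpow_eq_zero_iff_of_nonneg (abs_nonneg _)).mp hall).1
      exact abs_eq_zero.mp this
    rw [vrec_zero κ c l z hzero n (by omega), hzero n (by omega)]
  rcases lt_trichotomy (coord (n+1) z n) (vrec (n+1) κ c l n z) with hlt | hev | hgt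
  · -- t < v
    have hσ : Real.sign (coord (n+1) z n - vrec (n+1) κ c l n z) = -1 :=
      Real.sign_of_neg (by linarith)
    have hDle : D ≤ 0 := hneg hlt
    constructor
    · show D * vrec (n+1) κ c l (n+1) z ≤ 0
      rw [hω, hσ]
      nlinarith [mul_nonneg (mul_nonneg hl1.le hSe) (neg_nonneg.mpr hDle)]
    · intro h0
      exfalso
      rw [hω, hσ] at h0
      have hSe0 : (Ssum (n+1) κ c (n+1) z) ^ ((1 + (n:ℝ) * κ + κ) / c) = 0 := by
        rcases mul_eq_zero.mp h0 with h | h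
        · rcases mul_eq_zero.mp h with h | h
          · exact absurd h (by simp; linarith)
          · exact h
        · norm_num at h
      have hS0 : Ssum (n+1) κ c (n+1) z = 0 :=
        ((Real.rpow_eq_zero_iff_of_nonneg hS).mp hSe0).1
      exact absurd (hteqv hS0) (by linarith)
  · -- t = v
    have hω0 : vrec (n+1) κ c l (n+1) z = 0 := by
      rw [hω, hev, sub_self, Real.sign_zero, mul_zero]
    constructor
    · show D * vrec (n+1) κ c l (n+1) z ≤ 0
      rw [hω0, mul_zero]
    · intro _
      show D = 0
      exact hmin hev
  · -- t > v
    have hσ : Real.sign (coord (n+1) z n - vrec (n+1) κ c l n z) = 1 :=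
      Real.sign_of_pos (by linarith)
    have hDge : 0 ≤ D := hpos hgt
    constructor
    · show D * vrec (n+1) κ c l (n+1) z ≤ 0
      rw [hω, hσ]
      nlinarith [mul_nonneg (mul_nonneg hl1.le hSe) hDge]
    · intro h0
      exfalso
      rw [hω, hσ] at h0
      have hSe0 : (Ssum (n+1) κ c (n+1) z) ^ ((1 + (n:ℝ) * κ + κ) / c) = 0 := by
        rw [mul_one] at h0
        rcases mul_eq_zero.mp h0 with h | h
        · exact absurd h (by simp; linarith)
        · exact h
      have hS0 : Ssum (n+1) κ c (n+1) z = 0 :=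
        ((Real.rpow_eq_zero_iff_of_nonneg hS).mp hSe0).1
      exact absurd (hteqv hS0) (by linarith)
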